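/- Polynomial analogue of the Jacobi triple product identity: for all non-negative integers n, m and all q, x, \(\sum_{i=-n}^{m} q^{i^2} x^i \binom{n+m}{n+i}_{q^2} = (-q/x;q^2)_n\,(-qx;q^2)_m\), as an identity of Laurent polynomials in q and x. -/

import Mathlib

open Finset

/-- The finite q-Pochhammer symbol `(a;q)_n`. -/
noncomputable def qPoch (a q : RatFunc ℚ) (n : ℕ) : RatFunc ℚ :=
  ∏ k ∈ Finset.range n, (1 - a * q ^ k)

/-- The q-binomial coefficient `[top choose bot]_q`, zero unless `0 ≤ bot ≤ top`. -/
noncomputable def qBinom (q : RatFunc ℚ) (top bot : ℤ) : RatFunc ℚ :=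
  if 0 ≤ bot ∧ bot ≤ top then
    qPoch q q top.toNat / (qPoch q q bot.toNat * qPoch q q (top - bot).toNat)
  else 0

/-- The Legendre symbol modulo 3. -/
def leg3 (j : ℤ) : ℤ := if j % 3 = 1 then 1 else if j % 3 = 2 then -1 else 0

/-- `1/(q;q)_k`, with the convention that it is zero for negative `k`. -/
noncomputable def invPoch (q : RatFunc ℚ) (k : ℤ) : RatFunc ℚ :=
  if 0 ≤ k then (qPoch q q k.toNat)⁻¹ else 0

/-- The generic variable `q` in the field of rational functions. -/
noncomputable def Xq : RatFunc ℚ := RatFunc.X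

lemma Xq_ne_zero : Xq ≠ 0 := RatFunc.X_ne_zero

lemma Xq_pow_ne_one (t : ℕ) (ht : 0 < t) : Xq ^ t ≠ 1 := by
  intro h
  have h2 : (algebraMap (Polynomial ℚ) (RatFunc ℚ)) (Polynomial.X ^ t) =
      (algebraMap (Polynomial ℚ) (RatFunc ℚ)) 1 := by
    simpa [Xq, RatFunc.algebraMap_X, map_pow] using h
  have := RatFunc.algebraMap_injective (K := ℚ) h2
  have hd := congrArg Polynomial.natDegree this
  simp [Polynomial.natDegree_X_pow] at hd
  omega

lemma qPoch_zero (a q : RatFunc ℚ) : qPoch a q 0 = 1 := by simp [qPoch]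

lemma qPoch_succ (a q : RatFunc ℚ) (n : ℕ) :
    qPoch a q (n+1) = qPoch a q n * (1 - a * q ^ n) := by
  simp [qPoch, Finset.prod_range_succ]

lemma qPoch_ne_zero (q : RatFunc ℚ) (hfac : ∀ j : ℕ, (1 : RatFunc ℚ) - q * q ^ j ≠ 0)
    (n : ℕ) : qPoch q q n ≠ 0 :=
  Finset.prod_ne_zero_iff.2 fun j _ => hfac j

lemma hfacX : ∀ j : ℕ, (1 : RatFunc ℚ) - (Xq^2) * (Xq^2) ^ j ≠ 0 := by
  intro j h
  have h1 : (Xq^2 : RatFunc ℚ) * (Xq^2) ^ j = Xq ^ (2*(j+1)) := by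
    rw [← pow_mul]; ring
  rw [h1, sub_eq_zero] at h
  exact Xq_pow_ne_one (2*(j+1)) (by omega) h.symm

lemma qBinom_nat (q : RatFunc ℚ) (N k : ℕ) (h : k ≤ N) :
    qBinom q N k = qPoch q q N / (qPoch q q k * qPoch q q (N - k)) := by
  have h1 : ((N : ℤ) - (k : ℤ)).toNat = N - k := by omega
  simp [qBinom, h1, Int.toNat_natCast, (by exact_mod_cast h : (k:ℤ) ≤ (N:ℤ))]

lemma qBinom_of_neg (q : RatFunc ℚ) (a b : ℤ) (h : b < 0) : qBinom q a b = 0 := by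
  simp [qBinom]; omega

lemma qBinom_of_gt (q : RatFunc ℚ) (a b : ℤ) (h : a < b) : qBinom q a b = 0 := by
  simp [qBinom]; omega

lemma qBinom_zero_right (q : RatFunc ℚ) (hfac : ∀ j : ℕ, (1:RatFunc ℚ) - q * q ^ j ≠ 0)
    (N : ℕ) : qBinom q N 0 = 1 := by
  rw [show ((0:ℤ)) = ((0:ℕ):ℤ) by simp, qBinom_nat q N 0 (Nat.zero_le _)]
  simp [qPoch_zero, div_self (qPoch_ne_zero q hfac N)]

lemma qBinom_self (q : RatFunc ℚ) (hfac : ∀ j : ℕ, (1:RatFunc ℚ) - q * q ^ j ≠ 0)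
    (N : ℕ) : qBinom q N N = 1 := by
  rw [qBinom_nat q N N le_rfl]
  simp [qPoch_zero, div_self (qPoch_ne_zero q hfac N)]

lemma pascal1 (q : RatFunc ℚ)
    (hfac : ∀ j : ℕ, (1:RatFunc ℚ) - q * q ^ j ≠ 0) (N : ℕ) (b : ℤ) :
    qBinom q ((N:ℤ)+1) b = qBinom q N b + q ^ ((N:ℤ)+1-b) * qBinom q N (b-1) := by
  rcases lt_trichotomy b 0 with hb | hb | hb
  · rw [qBinom_of_neg q _ b hb, qBinom_of_neg q _ b hb, qBinom_of_neg q _ _ (by omega)]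
    ring
  · subst hb
    rw [show ((N:ℤ)+1) = ((N+1:ℕ):ℤ) by push_cast; ring,
      qBinom_zero_right q hfac (N+1), qBinom_zero_right q hfac N,
      qBinom_of_neg q _ _ (by omega)]
    ring
  · rcases lt_trichotomy b ((N:ℤ)+1) with hbN | hbN | hbN
    · obtain ⟨e, he⟩ : ∃ e : ℕ, b = (e:ℤ) + 1 := ⟨(b-1).toNat, by omega⟩
      obtain ⟨d, hd⟩ : ∃ d : ℕ, N = e + 1 + d := ⟨N - (e+1), by omega⟩
      subst he hd
      have hzp : q ^ (((e+1+d+1:ℕ):ℤ)-((e+1:ℕ):ℤ)) = q ^ (d+1 : ℕ) := by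
        rw [show (((e+1+d+1:ℕ):ℤ)-((e+1:ℕ):ℤ)) = ((d+1:ℕ):ℤ) by push_cast; ring,
          zpow_natCast]
      rw [show ((e+1+d:ℕ):ℤ)+1 = ((e+1+d+1:ℕ):ℤ) by push_cast; ring,
        show ((e:ℕ):ℤ)+1 = ((e+1:ℕ):ℤ) by push_cast; ring,
        show ((e+1:ℕ):ℤ) - 1 = ((e:ℕ):ℤ) by push_cast; ring, hzp]
      rw [qBinom_nat q _ _ (by omega), qBinom_nat q _ _ (by omega),
        qBinom_nat q _ _ (by omega)]
      have h1 : e + 1 + d + 1 - (e + 1) = d + 1 := by omega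
      have h2 : e + 1 + d - (e + 1) = d := by omega
      have h3 : e + 1 + d - e = d + 1 := by omega
      rw [h1, h2, h3]
      rw [qPoch_succ q q (e+1+d), qPoch_succ q q d, qPoch_succ q q e]
      have hPN := qPoch_ne_zero q hfac (e+1+d)
      have hPe := qPoch_ne_zero q hfac e
      have hPd := qPoch_ne_zero q hfac d
      have f1 := hfac (e+1+d)
      have f2 := hfac d
      have f3 := hfac e
      field_simp
      ring
    · rw [hbN, show ((N:ℤ)+1) = ((N+1:ℕ):ℤ) by push_cast; ring,
        qBinom_self q hfac (N+1), qBinom_of_gt q _ _ (by push_cast; omega),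
        show ((N+1:ℕ):ℤ)-1 = ((N:ℕ):ℤ) by push_cast; ring, qBinom_self q hfac N]
      simp
    · rw [qBinom_of_gt q _ _ (by omega), qBinom_of_gt q _ _ (by omega),
        qBinom_of_gt q _ _ (by omega)]
      ring

lemma pascal2 (q : RatFunc ℚ)
    (hfac : ∀ j : ℕ, (1:RatFunc ℚ) - q * q ^ j ≠ 0) (N : ℕ) (b : ℤ) :
    qBinom q ((N:ℤ)+1) b = qBinom q N (b-1) + q ^ b * qBinom q N b := by
  rcases lt_trichotomy b 0 with hb | hb | hb
  · rw [qBinom_of_neg q _ b hb, qBinom_of_neg q _ b hb, qBinom_of_neg q _ _ (by omega)]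
    ring
  · subst hb
    rw [show ((N:ℤ)+1) = ((N+1:ℕ):ℤ) by push_cast; ring,
      qBinom_zero_right q hfac (N+1), qBinom_zero_right q hfac N,
      qBinom_of_neg q _ _ (by omega)]
    norm_num
  · rcases lt_trichotomy b ((N:ℤ)+1) with hbN | hbN | hbN
    · obtain ⟨e, he⟩ : ∃ e : ℕ, b = (e:ℤ) + 1 := ⟨(b-1).toNat, by omega⟩
      obtain ⟨d, hd⟩ : ∃ d : ℕ, N = e + 1 + d := ⟨N - (e+1), by omega⟩
      subst he hd
      have hzp : q ^ (((e+1:ℕ):ℤ)) = q ^ (e+1 : ℕ) := zpow_natCast q (e+1)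
      rw [show ((e+1+d:ℕ):ℤ)+1 = ((e+1+d+1:ℕ):ℤ) by push_cast; ring,
        show ((e:ℕ):ℤ)+1 = ((e+1:ℕ):ℤ) by push_cast; ring,
        show ((e+1:ℕ):ℤ) - 1 = ((e:ℕ):ℤ) by push_cast; ring, hzp]
      rw [qBinom_nat q _ _ (by omega), qBinom_nat q _ _ (by omega),
        qBinom_nat q _ _ (by omega)]
      have h1 : e + 1 + d + 1 - (e + 1) = d + 1 := by omega
      have h2 : e + 1 + d - (e + 1) = d := by omega
      have h3 : e + 1 + d - e = d + 1 := by omega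
      rw [h1, h2, h3]
      rw [qPoch_succ q q (e+1+d), qPoch_succ q q d, qPoch_succ q q e]
      have hPN := qPoch_ne_zero q hfac (e+1+d)
      have hPe := qPoch_ne_zero q hfac e
      have hPd := qPoch_ne_zero q hfac d
      have f1 := hfac (e+1+d)
      have f2 := hfac d
      have f3 := hfac e
      field_simp
      ring
    · rw [hbN, show ((N:ℤ)+1) = ((N+1:ℕ):ℤ) by push_cast; ring,
        qBinom_self q hfac (N+1),
        show ((N+1:ℕ):ℤ)-1 = ((N:ℕ):ℤ) by push_cast; ring, qBinom_self q hfac N,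
        qBinom_of_gt q _ _ (by push_cast; omega)]
      ring
    · rw [qBinom_of_gt q _ _ (by omega), qBinom_of_gt q _ _ (by omega),
        qBinom_of_gt q _ _ (by omega)]
      ring

lemma termM (x B : RatFunc ℚ) (hx : x ≠ 0) (a mm : ℤ) :
    Xq ^ ((a+1)^2) * x ^ (a+1) * ((Xq^2) ^ (mm - a) * B) =
    Xq ^ (2*mm+1) * x * (Xq ^ (a^2) * x ^ a * B) := by
  have hq := Xq_ne_zero
  have h1 : Xq ^ ((a+1)^2) = Xq ^ (a^2) * Xq ^ (2*a+1) := by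
    rw [← zpow_add₀ hq]; congr 1; ring
  have h2 : x ^ (a+1) = x ^ a * x := by
    rw [zpow_add₀ hx, zpow_one]
  have h3 : (Xq^2 : RatFunc ℚ) ^ (mm-a) = Xq ^ (2*mm-2*a) := by
    rw [← zpow_natCast Xq 2, ← zpow_mul]; congr 1; ring
  have h4 : Xq ^ (2*a+1) * Xq ^ (2*mm-2*a) = Xq ^ (2*mm+1) := by
    rw [← zpow_add₀ hq]; congr 1; ring
  rw [h1, h2, h3]
  linear_combination (Xq ^ (a^2) * x ^ a * x * B) * h4

lemma termN (x B : RatFunc ℚ) (hx : x ≠ 0) (a nn : ℤ) :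
    Xq ^ ((a-1)^2) * x ^ (a-1) * ((Xq^2) ^ (a + nn) * B) =
    Xq ^ (2*nn+1) * x⁻¹ * (Xq ^ (a^2) * x ^ a * B) := by
  have hq := Xq_ne_zero
  have h1 : Xq ^ ((a-1)^2) = Xq ^ (a^2) * Xq ^ (1-2*a) := by
    rw [← zpow_add₀ hq]; congr 1; ring
  have h2 : x ^ (a-1) = x ^ a * x⁻¹ := by
    rw [sub_eq_add_neg, zpow_add₀ hx, zpow_neg, zpow_one]
  have h3 : (Xq^2 : RatFunc ℚ) ^ (a+nn) = Xq ^ (2*a+2*nn) := by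
    rw [← zpow_natCast Xq 2, ← zpow_mul]; congr 1; ring
  have h4 : Xq ^ (1-2*a) * Xq ^ (2*a+2*nn) = Xq ^ (2*nn+1) := by
    rw [← zpow_add₀ hq]; congr 1; ring
  rw [h1, h2, h3]
  linear_combination (Xq ^ (a^2) * x ^ a * x⁻¹ * B) * h4

lemma stepM (n m : ℕ) (x : RatFunc ℚ) (hx : x ≠ 0) :
    ∑ j ∈ Finset.range (n+m+2),
      Xq ^ (((j:ℤ)-(n:ℤ))^2) * x ^ ((j:ℤ)-(n:ℤ)) * qBinom (Xq^2) (((n+m:ℕ):ℤ)+1) (j:ℤ)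
    = (1 + Xq ^ (2*(m:ℤ)+1) * x) *
      ∑ j ∈ Finset.range (n+m+1),
        Xq ^ (((j:ℤ)-(n:ℤ))^2) * x ^ ((j:ℤ)-(n:ℤ)) * qBinom (Xq^2) ((n+m:ℕ):ℤ) (j:ℤ) := by
  have hsplit : ∀ j : ℕ,
      Xq ^ (((j:ℤ)-(n:ℤ))^2) * x ^ ((j:ℤ)-(n:ℤ)) * qBinom (Xq^2) (((n+m:ℕ):ℤ)+1) (j:ℤ)
      = Xq ^ (((j:ℤ)-(n:ℤ))^2) * x ^ ((j:ℤ)-(n:ℤ)) * qBinom (Xq^2) ((n+m:ℕ):ℤ) (j:ℤ)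
      + Xq ^ (((j:ℤ)-(n:ℤ))^2) * x ^ ((j:ℤ)-(n:ℤ)) *
          ((Xq^2) ^ (((n+m:ℕ):ℤ)+1-(j:ℤ)) * qBinom (Xq^2) ((n+m:ℕ):ℤ) ((j:ℤ)-1)) := by
    intro j
    rw [pascal1 (Xq^2) hfacX (n+m) (j:ℤ)]
    ring
  rw [Finset.sum_congr rfl (fun j _ => hsplit j), Finset.sum_add_distrib]
  have e1 : n + m + 2 = (n + m + 1) + 1 := rfl
  rw [e1,
    Finset.sum_range_succ (fun j : ℕ =>
      Xq ^ (((j:ℤ)-(n:ℤ))^2) * x ^ ((j:ℤ)-(n:ℤ)) * qBinom (Xq^2) ((n+m:ℕ):ℤ) (j:ℤ)) (n+m+1),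
    Finset.sum_range_succ' (fun j : ℕ =>
      Xq ^ (((j:ℤ)-(n:ℤ))^2) * x ^ ((j:ℤ)-(n:ℤ)) *
        ((Xq^2) ^ (((n+m:ℕ):ℤ)+1-(j:ℤ)) * qBinom (Xq^2) ((n+m:ℕ):ℤ) ((j:ℤ)-1))) (n+m+1)]
  have z1 : qBinom (Xq^2) ((n+m:ℕ):ℤ) ((n+m+1:ℕ):ℤ) = 0 :=
    qBinom_of_gt _ _ _ (by push_cast; omega)
  have z2 : qBinom (Xq^2) ((n+m:ℕ):ℤ) (((0:ℕ):ℤ)-1) = 0 :=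
    qBinom_of_neg _ _ _ (by norm_num)
  rw [z1, z2]
  have hterm : ∀ j : ℕ, j ∈ Finset.range (n+m+1) →
      Xq ^ ((((j+1:ℕ):ℤ)-(n:ℤ))^2) * x ^ (((j+1:ℕ):ℤ)-(n:ℤ)) *
        ((Xq^2) ^ (((n+m:ℕ):ℤ)+1-((j+1:ℕ):ℤ)) * qBinom (Xq^2) ((n+m:ℕ):ℤ) (((j+1:ℕ):ℤ)-1))
      = Xq ^ (2*(m:ℤ)+1) * x *
        (Xq ^ (((j:ℤ)-(n:ℤ))^2) * x ^ ((j:ℤ)-(n:ℤ)) * qBinom (Xq^2) ((n+m:ℕ):ℤ) (j:ℤ)) := by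
    intro j _
    have c1 : ((j+1:ℕ):ℤ) - (n:ℤ) = ((j:ℤ)-(n:ℤ)) + 1 := by push_cast; ring
    have c2 : ((n+m:ℕ):ℤ)+1-((j+1:ℕ):ℤ) = (m:ℤ) - ((j:ℤ)-(n:ℤ)) := by push_cast; ring
    have c3 : ((j+1:ℕ):ℤ) - 1 = (j:ℤ) := by push_cast; ring
    rw [c1, c2, c3]
    exact termM x _ hx ((j:ℤ)-(n:ℤ)) (m:ℤ)
  rw [Finset.sum_congr rfl hterm, ← Finset.mul_sum]
  ring

lemma stepN (n m : ℕ) (x : RatFunc ℚ) (hx : x ≠ 0) :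
    ∑ j ∈ Finset.range (n+m+2),
      Xq ^ (((j:ℤ)-(n:ℤ)-1)^2) * x ^ ((j:ℤ)-(n:ℤ)-1) * qBinom (Xq^2) (((n+m:ℕ):ℤ)+1) (j:ℤ)
    = (1 + Xq ^ (2*(n:ℤ)+1) * x⁻¹) *
      ∑ j ∈ Finset.range (n+m+1),
        Xq ^ (((j:ℤ)-(n:ℤ))^2) * x ^ ((j:ℤ)-(n:ℤ)) * qBinom (Xq^2) ((n+m:ℕ):ℤ) (j:ℤ) := by
  have hsplit : ∀ j : ℕ,
      Xq ^ (((j:ℤ)-(n:ℤ)-1)^2) * x ^ ((j:ℤ)-(n:ℤ)-1) * qBinom (Xq^2) (((n+m:ℕ):ℤ)+1) (j:ℤ)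
      = Xq ^ (((j:ℤ)-(n:ℤ)-1)^2) * x ^ ((j:ℤ)-(n:ℤ)-1) * qBinom (Xq^2) ((n+m:ℕ):ℤ) ((j:ℤ)-1)
      + Xq ^ (((j:ℤ)-(n:ℤ)-1)^2) * x ^ ((j:ℤ)-(n:ℤ)-1) *
          ((Xq^2) ^ ((j:ℤ)) * qBinom (Xq^2) ((n+m:ℕ):ℤ) (j:ℤ)) := by
    intro j
    rw [pascal2 (Xq^2) hfacX (n+m) (j:ℤ)]
    ring
  rw [Finset.sum_congr rfl (fun j _ => hsplit j), Finset.sum_add_distrib]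
  have e1 : n + m + 2 = (n + m + 1) + 1 := rfl
  rw [e1,
    Finset.sum_range_succ' (fun j : ℕ =>
      Xq ^ (((j:ℤ)-(n:ℤ)-1)^2) * x ^ ((j:ℤ)-(n:ℤ)-1) *
        qBinom (Xq^2) ((n+m:ℕ):ℤ) ((j:ℤ)-1)) (n+m+1),
    Finset.sum_range_succ (fun j : ℕ =>
      Xq ^ (((j:ℤ)-(n:ℤ)-1)^2) * x ^ ((j:ℤ)-(n:ℤ)-1) *
        ((Xq^2) ^ ((j:ℤ)) * qBinom (Xq^2) ((n+m:ℕ):ℤ) (j:ℤ))) (n+m+1)]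
  have z1 : qBinom (Xq^2) ((n+m:ℕ):ℤ) (((0:ℕ):ℤ)-1) = 0 :=
    qBinom_of_neg _ _ _ (by norm_num)
  have z2 : qBinom (Xq^2) ((n+m:ℕ):ℤ) ((n+m+1:ℕ):ℤ) = 0 :=
    qBinom_of_gt _ _ _ (by push_cast; omega)
  rw [z1, z2]
  have hterm1 : ∀ j : ℕ, j ∈ Finset.range (n+m+1) →
      Xq ^ ((((j+1:ℕ):ℤ)-(n:ℤ)-1)^2) * x ^ (((j+1:ℕ):ℤ)-(n:ℤ)-1) *
        qBinom (Xq^2) ((n+m:ℕ):ℤ) (((j+1:ℕ):ℤ)-1)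
      = Xq ^ (((j:ℤ)-(n:ℤ))^2) * x ^ ((j:ℤ)-(n:ℤ)) * qBinom (Xq^2) ((n+m:ℕ):ℤ) (j:ℤ) := by
    intro j _
    have c1 : ((j+1:ℕ):ℤ) - (n:ℤ) - 1 = (j:ℤ)-(n:ℤ) := by push_cast; ring
    have c3 : ((j+1:ℕ):ℤ) - 1 = (j:ℤ) := by push_cast; ring
    rw [c1, c3]
  have hterm2 : ∀ j : ℕ, j ∈ Finset.range (n+m+1) →
      Xq ^ (((j:ℤ)-(n:ℤ)-1)^2) * x ^ ((j:ℤ)-(n:ℤ)-1) *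
        ((Xq^2) ^ ((j:ℤ)) * qBinom (Xq^2) ((n+m:ℕ):ℤ) (j:ℤ))
      = Xq ^ (2*(n:ℤ)+1) * x⁻¹ *
        (Xq ^ (((j:ℤ)-(n:ℤ))^2) * x ^ ((j:ℤ)-(n:ℤ)) * qBinom (Xq^2) ((n+m:ℕ):ℤ) (j:ℤ)) := by
    intro j _
    have c2 : (j:ℤ) = ((j:ℤ)-(n:ℤ)) + (n:ℤ) := by ring
    rw [show ((Xq^2 : RatFunc ℚ)) ^ ((j:ℤ)) = (Xq^2) ^ (((j:ℤ)-(n:ℤ)) + (n:ℤ)) by rw [← c2]]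
    exact termN x _ hx ((j:ℤ)-(n:ℤ)) (n:ℤ)
  rw [Finset.sum_congr rfl hterm1, Finset.sum_congr rfl hterm2, ← Finset.mul_sum]
  ring

lemma key (n m : ℕ) (x : RatFunc ℚ) (hx : x ≠ 0) :
    ∑ j ∈ Finset.range (n+m+1),
      Xq ^ (((j:ℤ)-(n:ℤ))^2) * x ^ ((j:ℤ)-(n:ℤ)) * qBinom (Xq^2) ((n+m:ℕ):ℤ) (j:ℤ)
    = qPoch (-Xq/x) (Xq^2) n * qPoch (-Xq*x) (Xq^2) m := by
  induction n with
  | zero =>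
    induction m with
    | zero =>
      rw [Finset.sum_range_one]
      have : qBinom (Xq^2) ((0+0:ℕ):ℤ) ((0:ℕ):ℤ) = 1 := by
        have := qBinom_self (Xq^2) hfacX 0
        simpa using this
      rw [this]
      simp [qPoch_zero]
    | succ m ih =>
      have e0 : (0:ℕ) + (m+1) + 1 = 0 + m + 2 := by omega
      have e1 : ∀ j : ℕ, qBinom (Xq^2) ((0+(m+1):ℕ):ℤ) (j:ℤ)
          = qBinom (Xq^2) (((0+m:ℕ):ℤ)+1) (j:ℤ) := by
        intro j; congr 1
      rw [e0, Finset.sum_congr rfl (fun j _ => by rw [e1 j]), stepM 0 m x hx, ih]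
      rw [qPoch_succ (-Xq*x) (Xq^2) m]
      have e2 : Xq ^ (2*(m:ℤ)+1) = Xq ^ (2*m+1 : ℕ) := by
        rw [show (2*(m:ℤ)+1) = ((2*m+1:ℕ):ℤ) by push_cast; ring, zpow_natCast]
      rw [e2]
      have e3 : (1 + Xq ^ (2*m+1:ℕ) * x) = (1 - (-Xq*x) * (Xq^2) ^ m) := by
        rw [show (2*m+1 : ℕ) = m*2+1 by omega, pow_succ' , pow_mul]
        ring
      rw [e3]; ring
  | succ n ih =>
    have e0 : (n+1) + m + 1 = n + m + 2 := by omega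
    have e1 : ∀ j : ℕ,
        Xq ^ (((j:ℤ)-((n+1:ℕ):ℤ))^2) * x ^ ((j:ℤ)-((n+1:ℕ):ℤ)) *
          qBinom (Xq^2) (((n+1)+m:ℕ):ℤ) (j:ℤ)
        = Xq ^ (((j:ℤ)-(n:ℤ)-1)^2) * x ^ ((j:ℤ)-(n:ℤ)-1) *
          qBinom (Xq^2) (((n+m:ℕ):ℤ)+1) (j:ℤ) := by
      intro j
      rw [show ((j:ℤ)-((n+1:ℕ):ℤ)) = (j:ℤ)-(n:ℤ)-1 by push_cast; ring,
        show (((n+1)+m:ℕ):ℤ) = ((n+m:ℕ):ℤ)+1 by push_cast; ring]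
    rw [e0, Finset.sum_congr rfl (fun j _ => e1 j), stepN n m x hx, ih]
    rw [qPoch_succ (-Xq/x) (Xq^2) n]
    have e2 : Xq ^ (2*(n:ℤ)+1) = Xq ^ (2*n+1 : ℕ) := by
      rw [show (2*(n:ℤ)+1) = ((2*n+1:ℕ):ℤ) by push_cast; ring, zpow_natCast]
    have e3 : (1 + Xq ^ (2*n+1:ℕ) * x⁻¹) = (1 - (-Xq/x) * (Xq^2) ^ n) := by
      rw [show (2*n+1 : ℕ) = n*2+1 by omega, pow_succ', pow_mul, div_eq_mul_inv]
      ring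
    rw [e2, e3]; ring

/-- Polynomial analogue of the Jacobi triple product identity: for `n, m ≥ 0`,
`∑_{i=-n}^{m} q^{i²} x^i [n+m choose n+i]_{q²} = (-q/x;q²)_n (-qx;q²)_m`,
as an identity of rational functions (Laurent polynomials) in `q` and `x`. -/
theorem statement2 (n m : ℕ) :
    ∀ x : RatFunc ℚ, x ≠ 0 →
    ∑ i ∈ Finset.Icc (-(n : ℤ)) (m : ℤ),
      Xq ^ (i ^ 2) * x ^ i * qBinom (Xq ^ 2) ((n : ℤ) + m) ((n : ℤ) + i) =
    qPoch (-Xq / x) (Xq ^ 2) n * qPoch (-Xq * x) (Xq ^ 2) m := by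
  intro x hx
  have hmap : Finset.Icc (-(n:ℤ)) (m:ℤ)
      = Finset.map ⟨fun j : ℕ => (j:ℤ) - n, show Function.Injective (fun j : ℕ => (j:ℤ) - n) by intro a b h; simp only at h; omega⟩
          (Finset.range (n+m+1)) := by
    ext k
    simp only [Finset.mem_Icc, Finset.mem_map, Finset.mem_range,
      Function.Embedding.coeFn_mk]
    constructor
    · rintro ⟨h1, h2⟩; exact ⟨(k + n).toNat, by omega, by omega⟩
    · rintro ⟨a, ha, rfl⟩; omega
  rw [hmap, Finset.sum_map]
  simp only [Function.Embedding.coeFn_mk]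
  have hcg : ∀ j : ℕ, j ∈ Finset.range (n+m+1) →
      Xq ^ (((j:ℤ)-(n:ℤ)) ^ 2) * x ^ ((j:ℤ)-(n:ℤ)) *
        qBinom (Xq ^ 2) ((n:ℤ) + m) ((n:ℤ) + ((j:ℤ) - n))
      = Xq ^ (((j:ℤ)-(n:ℤ))^2) * x ^ ((j:ℤ)-(n:ℤ)) * qBinom (Xq^2) ((n+m:ℕ):ℤ) (j:ℤ) := by
    intro j _
    rw [show ((n:ℤ) + ((j:ℤ) - n)) = (j:ℤ) by ring,
      show ((n:ℤ) + (m:ℤ)) = ((n+m:ℕ):ℤ) by push_cast; ring]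
  rw [Finset.sum_congr rfl hcg]
  exact key n m x hx
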